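/- The gap C_UB(s) − C_Latt(s) tends to log₂(3)/4 as s → ∞, where C_UB(s) = log₂(1+s)·log₂(1+3s)/(log₂(1+s)+log₂(1+3s)) and C_Latt(s) = log₂(1+s)·log₂(1/3+s)/(log₂(1+s)+log₂(1/3+s)). -/

import Mathlib

open Real Filter

private lemma hlogtop : Tendsto (fun s : ℝ => logb 2 (1 + s)) atTop atTop :=
  (Real.tendsto_logb_atTop one_lt_two).comp (tendsto_atTop_add_const_left _ 1 tendsto_id)

private lemma ratio1 : Tendsto (fun s : ℝ => logb 2 (1 + 3 * s) / logb 2 (1 + s)) atTop (nhds 1) := by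
  have hub : Tendsto (fun s : ℝ => 1 + logb 2 3 / logb 2 (1 + s)) atTop (nhds 1) := by
    have := (tendsto_const_nhds (x := logb 2 3)).div_atTop hlogtop
    simpa using tendsto_const_nhds.add this
  refine tendsto_of_tendsto_of_tendsto_of_le_of_le' tendsto_const_nhds hub ?_ ?_
  · filter_upwards [eventually_ge_atTop (1:ℝ)] with s hs
    have ha : (0:ℝ) < logb 2 (1 + s) := Real.logb_pos one_lt_two (by linarith)
    have hle : logb 2 (1 + s) ≤ logb 2 (1 + 3 * s) :=
      Real.logb_le_logb_of_le one_lt_two (by linarith) (by linarith)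
    rw [le_div_iff₀ ha]; linarith
  · filter_upwards [eventually_ge_atTop (1:ℝ)] with s hs
    have ha : (0:ℝ) < logb 2 (1 + s) := Real.logb_pos one_lt_two (by linarith)
    have hle : logb 2 (1 + 3 * s) ≤ logb 2 3 + logb 2 (1 + s) := by
      rw [← Real.logb_mul (by norm_num) (by positivity)]
      exact Real.logb_le_logb_of_le one_lt_two (by linarith) (by nlinarith)
    rw [div_le_iff₀ ha]
    have : logb 2 3 / logb 2 (1 + s) * logb 2 (1 + s) = logb 2 3 := by field_simp
    nlinarith [this]

private lemma ratio2 : Tendsto (fun s : ℝ => logb 2 (1/3 + s) / logb 2 (1 + s)) atTop (nhds 1) := by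
  have hlb : Tendsto (fun s : ℝ => 1 - logb 2 3 / logb 2 (1 + s)) atTop (nhds 1) := by
    have := (tendsto_const_nhds (x := logb 2 3)).div_atTop hlogtop
    simpa using tendsto_const_nhds.sub this
  refine tendsto_of_tendsto_of_tendsto_of_le_of_le' hlb tendsto_const_nhds ?_ ?_
  · filter_upwards [eventually_ge_atTop (1:ℝ)] with s hs
    have ha : (0:ℝ) < logb 2 (1 + s) := Real.logb_pos one_lt_two (by linarith)
    have hle : logb 2 (1 + s) ≤ logb 2 3 + logb 2 (1/3 + s) := by
      rw [← Real.logb_mul (by norm_num) (by linarith)]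
      exact Real.logb_le_logb_of_le one_lt_two (by linarith) (by nlinarith)
    rw [sub_le_iff_le_add, ← add_div, le_div_iff₀ ha]
    nlinarith
  · filter_upwards [eventually_ge_atTop (1:ℝ)] with s hs
    have ha : (0:ℝ) < logb 2 (1 + s) := Real.logb_pos one_lt_two (by linarith)
    have hle : logb 2 (1/3 + s) ≤ logb 2 (1 + s) :=
      Real.logb_le_logb_of_le one_lt_two (by linarith) (by linarith)
    rw [div_le_iff₀ ha]; linarith

theorem stmt6 :
    Tendsto (fun s : ℝ =>
      logb 2 (1 + s) * logb 2 (1 + 3 * s) / (logb 2 (1 + s) + logb 2 (1 + 3 * s)) -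
      logb 2 (1 + s) * logb 2 (1 / 3 + s) / (logb 2 (1 + s) + logb 2 (1 / 3 + s)))
      atTop (nhds (logb 2 3 / 4)) := by
  have h1 : Tendsto (fun s : ℝ => (1 + logb 2 (1 + 3 * s) / logb 2 (1 + s)) *
      (1 + logb 2 (1/3 + s) / logb 2 (1 + s))) atTop (nhds 4) := by
    have := ((tendsto_const_nhds (x := (1:ℝ))).add ratio1).mul ((tendsto_const_nhds (x := (1:ℝ))).add ratio2)
    norm_num at this; exact this
  have h2 : Tendsto (fun s : ℝ => logb 2 3 / ((1 + logb 2 (1 + 3 * s) / logb 2 (1 + s)) *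
      (1 + logb 2 (1/3 + s) / logb 2 (1 + s)))) atTop (nhds (logb 2 3 / 4)) :=
    tendsto_const_nhds.div h1 (by norm_num)
  refine h2.congr' ?_
  filter_upwards [eventually_ge_atTop (1:ℝ)] with s hs
  set a := logb 2 (1 + s) with hadef
  set c := logb 2 (1/3 + s) with hcdef
  have ha : (0:ℝ) < a := Real.logb_pos one_lt_two (by linarith)
  have hc : (0:ℝ) < c := Real.logb_pos one_lt_two (by norm_num; linarith)
  have hb : logb 2 (1 + 3 * s) = logb 2 3 + c := by
    rw [hcdef, ← Real.logb_mul (by norm_num) (by linarith)]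
    ring_nf
  have h3 : (0:ℝ) < logb 2 3 := Real.logb_pos one_lt_two (by norm_num)
  rw [hb]
  field_simp
  ring
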